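/- arXiv:1402.2259 — 3 statements merged into one kernel-verified Lean document; each statement's English description precedes it below -/
import Mathlib

section
/- Let p ∈ (1,∞) with conjugate exponent p′ (1/p + 1/p′ = 1), let E be a separable complex Banach space, and let T : E → L^{p′}(ℝ^d; ℂ) be a bounded linear operator. Suppose there exists a nonnegative function b ∈ L^{p′}(ℝ^d) such that for every ψ ∈ E one has |(Tψ)(x)| ≤ b(x)·‖ψ‖_E for almost every x ∈ ℝ^d. Then there exists a continuous linear functional F on the Bochner space L^p(ℝ^d; E), with operator norm at most ‖b‖_{L^{p′}(ℝ^d)}, such that for every φ ∈ L^p(ℝ^d; ℂ) and every ψ ∈ E, F(x ↦ φ(x)·ψ) = ∫_{ℝ^d} (Tψ)(x)·φ(x) dx. -/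
open MeasureTheory Filter Topology ENNReal NNReal

noncomputable section

/-- Rational complex numbers, indexed by pairs of rationals. -/
def ratC (q : ℚ × ℚ) : ℂ := (q.1 : ℂ) + (q.2 : ℂ) * Complex.I

lemma ratC_zero : ratC 0 = 0 := by simp [ratC]

lemma ratC_zero' : ratC (0, 0) = 0 := by simp [ratC]

lemma ratC_one : ratC (1, 0) = 1 := by simp [ratC]

lemma ratC_tendsto (a : ℂ) : ∃ s : ℕ → ℚ × ℚ,
    Tendsto (fun j => ratC (s j)) atTop (nhds a) := by
  have h1 : ∀ j : ℕ, ∃ q : ℚ, |a.re - (q:ℝ)| < 1 / ((j:ℝ) + 1) := fun j =>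
    exists_rat_near _ (by positivity)
  have h2 : ∀ j : ℕ, ∃ q : ℚ, |a.im - (q:ℝ)| < 1 / ((j:ℝ) + 1) := fun j =>
    exists_rat_near _ (by positivity)
  choose s1 hs1 using h1
  choose s2 hs2 using h2
  refine ⟨fun j => (s1 j, s2 j), ?_⟩
  rw [tendsto_iff_norm_sub_tendsto_zero]
  have hlim : Tendsto (fun j : ℕ => 1 / ((j:ℝ) + 1) + 1 / ((j:ℝ) + 1)) atTop (nhds 0) := by
    have h : Tendsto (fun n : ℕ => 1 / ((n : ℝ) + 1)) atTop (nhds 0) :=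
      tendsto_one_div_add_atTop_nhds_zero_nat
    simpa using h.add h
  refine squeeze_zero (fun j => norm_nonneg _) (fun j => ?_) hlim
  have hrw : ratC (s1 j, s2 j) - a
      = (((s1 j : ℝ) - a.re : ℝ) : ℂ) + (((s2 j : ℝ) - a.im : ℝ) : ℂ) * Complex.I := by
    apply Complex.ext <;> simp [ratC]
  rw [hrw]
  calc ‖(((s1 j : ℝ) - a.re : ℝ) : ℂ) + (((s2 j : ℝ) - a.im : ℝ) : ℂ) * Complex.I‖
      ≤ ‖(((s1 j : ℝ) - a.re : ℝ) : ℂ)‖ + ‖(((s2 j : ℝ) - a.im : ℝ) : ℂ) * Complex.I‖ :=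
        norm_add_le _ _
    _ ≤ 1 / ((j:ℝ) + 1) + 1 / ((j:ℝ) + 1) := by
        rw [norm_mul, Complex.norm_I, mul_one, Complex.norm_real, Complex.norm_real,
          Real.norm_eq_abs, Real.norm_eq_abs, abs_sub_comm _ a.re, abs_sub_comm _ a.im]
        exact add_le_add (hs1 j).le (hs2 j).le

/-- Construction of a measurable field of continuous linear functionals out of
a dominated family indexed by a dense sequence. -/
lemma kernel_construction {α : Type*} [MeasurableSpace α]
    {E : Type*} [NormedAddCommGroup E] [NormedSpace ℂ E]
    (u : ℕ → E) (hu : DenseRange u)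
    (β : α → ℝ) (hβ : StronglyMeasurable β)
    (Φ : ℕ → α → ℂ) (hΦ : ∀ n, StronglyMeasurable (Φ n)) :
    ∃ k : α → E →L[ℂ] ℂ,
      (∀ x ψ, ‖k x ψ‖ ≤ max (β x) 0 * ‖ψ‖) ∧
      (∀ ψ, StronglyMeasurable (fun x => k x ψ)) ∧
      (∀ x, (∀ a n m : ℕ, ∀ q r : ℚ × ℚ,
          ‖Φ a x - ratC q * Φ n x - ratC r * Φ m x‖ ≤
            β x * ‖u a - ratC q • u n - ratC r • u m‖) →
        ∀ ψ : E, ∀ c : ℕ → ℕ, Tendsto (fun j => u (c j)) atTop (nhds ψ) →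
          Tendsto (fun j => Φ (c j) x) atTop (nhds (k x ψ))) := by
  classical
  set Good : Set α := {x | ∀ a n m : ℕ, ∀ q r : ℚ × ℚ,
      ‖Φ a x - ratC q * Φ n x - ratC r * Φ m x‖ ≤
        β x * ‖u a - ratC q • u n - ratC r • u m‖} with hGooddef
  have hmeas_good : MeasurableSet Good := by
    have : Good = ⋂ (a : ℕ), ⋂ (n : ℕ), ⋂ (m : ℕ), ⋂ (q : ℚ × ℚ), ⋂ (r : ℚ × ℚ),
        {x | ‖Φ a x - ratC q * Φ n x - ratC r * Φ m x‖ ≤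
          β x * ‖u a - ratC q • u n - ratC r • u m‖} := by
      ext x; simp [hGooddef, Set.mem_iInter]
    rw [this]
    refine MeasurableSet.iInter fun a => MeasurableSet.iInter fun n =>
      MeasurableSet.iInter fun m => MeasurableSet.iInter fun q =>
      MeasurableSet.iInter fun r => measurableSet_le ?_ ?_
    · exact ((((hΦ a).measurable.sub ((hΦ n).measurable.const_mul _)).sub
        ((hΦ m).measurable.const_mul _)).norm)
    · exact hβ.measurable.mul_const _
  -- Lipschitz estimate on the dense sequence
  have hlip : ∀ x ∈ Good, ∀ a n : ℕ, ‖Φ a x - Φ n x‖ ≤ β x * ‖u a - u n‖ := by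
    intro x hx a n
    have h := hx a n n (1, 0) (0, 0)
    simpa [ratC_one, ratC_zero, ratC_zero'] using h
  -- approximating sequences
  have happrox : ∀ (ψ : E) (j : ℕ), ∃ n, dist ψ (u n) < 1 / ((j:ℝ) + 1) := fun ψ j =>
    hu.exists_dist_lt ψ (by positivity)
  choose ap hap using happrox
  have htend : ∀ ψ : E, Tendsto (fun j => u (ap ψ j)) atTop (nhds ψ) := by
    intro ψ
    rw [tendsto_iff_dist_tendsto_zero]
    refine squeeze_zero (fun j => dist_nonneg) (fun j => ?_)
      tendsto_one_div_add_atTop_nhds_zero_nat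
    rw [dist_comm]; exact (hap ψ j).le
  -- Cauchy
  have hcau : ∀ x ∈ Good, ∀ c : ℕ → ℕ, CauchySeq (fun j => u (c j)) →
      CauchySeq (fun j => Φ (c j) x) := by
    intro x hx c hc
    rw [Metric.cauchySeq_iff] at hc ⊢
    intro ε hε
    have hC : (0:ℝ) < max (β x) 0 + 1 := by positivity
    obtain ⟨N, hN⟩ := hc (ε / (max (β x) 0 + 1)) (by positivity)
    refine ⟨N, fun i hi j hj => ?_⟩
    have h1 : dist (Φ (c i) x) (Φ (c j) x) ≤ β x * ‖u (c i) - u (c j)‖ := by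
      rw [dist_eq_norm]; exact hlip x hx _ _
    have h2 : β x * ‖u (c i) - u (c j)‖ ≤ (max (β x) 0 + 1) * dist (u (c i)) (u (c j)) := by
      rw [dist_eq_norm]
      exact mul_le_mul (by nlinarith [le_max_left (β x) (0:ℝ)]) le_rfl (norm_nonneg _) hC.le
    calc dist (Φ (c i) x) (Φ (c j) x) ≤ (max (β x) 0 + 1) * dist (u (c i)) (u (c j)) :=
          h1.trans h2
      _ < (max (β x) 0 + 1) * (ε / (max (β x) 0 + 1)) := by
          exact mul_lt_mul_of_pos_left (hN i hi j hj) hC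
      _ = ε := mul_div_cancel₀ _ hC.ne'
  have hcau' : ∀ x (_ : x ∈ Good) (ψ : E), CauchySeq (fun j => Φ (ap ψ j) x) := fun x hx ψ =>
    hcau x hx _ (htend ψ).cauchySeq
  -- the kernel (pointwise limit)
  set K : α → E → ℂ := fun x ψ =>
    if hx : x ∈ Good then (cauchySeq_tendsto_of_complete (hcau' x hx ψ)).choose else 0
    with hKdef
  have hK : ∀ x (hx : x ∈ Good) (ψ : E),
      Tendsto (fun j => Φ (ap ψ j) x) atTop (nhds (K x ψ)) := by
    intro x hx ψ
    have h := (cauchySeq_tendsto_of_complete (hcau' x hx ψ)).choose_spec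
    simpa only [hKdef, dif_pos hx] using h
  have hK0 : ∀ x, x ∉ Good → ∀ ψ, K x ψ = 0 := by
    intro x hx ψ; simp only [hKdef, dif_neg hx]
  -- limits along arbitrary approximating sequences
  have hKall : ∀ x (hx : x ∈ Good) (ψ : E) (c : ℕ → ℕ),
      Tendsto (fun j => u (c j)) atTop (nhds ψ) →
      Tendsto (fun j => Φ (c j) x) atTop (nhds (K x ψ)) := by
    intro x hx ψ c hc
    refine (hK x hx ψ).congr_dist ?_
    refine squeeze_zero (g := fun j => |β x| * ‖u (ap ψ j) - u (c j)‖)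
      (fun j => dist_nonneg) (fun j => ?_) ?_
    · rw [dist_eq_norm]
      exact (hlip x hx _ _).trans
        (mul_le_mul_of_nonneg_right (le_abs_self _) (norm_nonneg _))
    · have h1 : Tendsto (fun j => u (ap ψ j) - u (c j)) atTop (nhds (ψ - ψ)) :=
        (htend ψ).sub hc
      rw [sub_self] at h1
      simpa using (h1.norm).const_mul |β x|
  -- master limiting inequality
  have hmaster : ∀ x (hx : x ∈ Good) (ψ₁ ψ₂ ψ₃ : E) (A B : ℂ),
      ‖K x ψ₁ - A * K x ψ₂ - B * K x ψ₃‖ ≤ β x * ‖ψ₁ - A • ψ₂ - B • ψ₃‖ := by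
    intro x hx ψ₁ ψ₂ ψ₃ A B
    obtain ⟨qa, hqa⟩ := ratC_tendsto A
    obtain ⟨qb, hqb⟩ := ratC_tendsto B
    have hL : Tendsto
        (fun j => ‖Φ (ap ψ₁ j) x - ratC (qa j) * Φ (ap ψ₂ j) x - ratC (qb j) * Φ (ap ψ₃ j) x‖)
        atTop (nhds ‖K x ψ₁ - A * K x ψ₂ - B * K x ψ₃‖) :=
      (((hK x hx ψ₁).sub (hqa.mul (hK x hx ψ₂))).sub (hqb.mul (hK x hx ψ₃))).norm
    have hR : Tendsto
        (fun j => β x * ‖u (ap ψ₁ j) - ratC (qa j) • u (ap ψ₂ j) - ratC (qb j) • u (ap ψ₃ j)‖)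
        atTop (nhds (β x * ‖ψ₁ - A • ψ₂ - B • ψ₃‖)) :=
      ((((htend ψ₁).sub (hqa.smul (htend ψ₂))).sub (hqb.smul (htend ψ₃))).norm).const_mul (β x)
    exact le_of_tendsto_of_tendsto' hL hR (fun j => hx _ _ _ _ _)
  have hKbound : ∀ x (hx : x ∈ Good) (ψ : E), ‖K x ψ‖ ≤ β x * ‖ψ‖ := by
    intro x hx ψ
    have := hmaster x hx ψ ψ ψ 0 0
    simpa using this
  have hKadd : ∀ x (hx : x ∈ Good) (ψ ψ' : E), K x (ψ + ψ') = K x ψ + K x ψ' := by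
    intro x hx ψ ψ'
    have h := hmaster x hx (ψ + ψ') ψ ψ' 1 1
    simp only [one_mul, one_smul] at h
    have h2 : ψ + ψ' - ψ - ψ' = 0 := by abel
    rw [h2, norm_zero, mul_zero] at h
    have h3 : K x (ψ + ψ') - K x ψ - K x ψ' = 0 := by
      have := norm_le_zero_iff.mp h; exact this
    have := sub_eq_zero.mp (by rw [sub_sub] at h3; exact h3)
    exact this
  have hKsmul : ∀ x (hx : x ∈ Good) (A : ℂ) (ψ : E), K x (A • ψ) = A * K x ψ := by
    intro x hx A ψ
    have h := hmaster x hx (A • ψ) ψ ψ A 0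
    simp only [zero_mul, zero_smul, sub_zero] at h
    rw [sub_self, norm_zero, mul_zero] at h
    exact sub_eq_zero.mp (norm_le_zero_iff.mp h)
  have hadd : ∀ x (ψ ψ' : E), K x (ψ + ψ') = K x ψ + K x ψ' := by
    intro x ψ ψ'
    by_cases hx : x ∈ Good
    · exact hKadd x hx ψ ψ'
    · simp [hK0 x hx]
  have hsmul : ∀ x (A : ℂ) (ψ : E), K x (A • ψ) = A * K x ψ := by
    intro x A ψ
    by_cases hx : x ∈ Good
    · exact hKsmul x hx A ψ
    · simp [hK0 x hx]
  have hbd : ∀ x (ψ : E), ‖K x ψ‖ ≤ max (β x) 0 * ‖ψ‖ := by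
    intro x ψ
    by_cases hx : x ∈ Good
    · exact (hKbound x hx ψ).trans
        (mul_le_mul_of_nonneg_right (le_max_left _ _) (norm_nonneg _))
    · rw [hK0 x hx, norm_zero]; positivity
  set k' : α → E →L[ℂ] ℂ := fun x => LinearMap.mkContinuous
    { toFun := K x
      map_add' := hadd x
      map_smul' := fun A ψ => by simpa using hsmul x A ψ } (max (β x) 0) (hbd x) with hk'def
  have hcoe : ∀ x ψ, k' x ψ = K x ψ := fun x ψ => rfl
  refine ⟨k', ?_, ?_, ?_⟩
  · intro x ψ; rw [hcoe]; exact hbd x ψ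
  · intro ψ
    have : (fun x => k' x ψ) = fun x => K x ψ := by ext x; exact hcoe x ψ
    rw [this]
    refine stronglyMeasurable_of_tendsto atTop
      (f := fun j => Good.indicator (fun x => Φ (ap ψ j) x))
      (fun j => (hΦ (ap ψ j)).indicator hmeas_good) (tendsto_pi_nhds.2 fun x => ?_)
    by_cases hx : x ∈ Good
    · simp only [Set.indicator_of_mem hx]
      exact hK x hx ψ
    · simp only [Set.indicator_of_notMem hx, hK0 x hx]
      exact tendsto_const_nhds
  · intro x hx ψ c hc
    rw [hcoe]
    exact hKall x hx ψ c hc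

/-- Weak measurability plus pointwise continuity gives measurability of `x ↦ k x (g x)`. -/
lemma stronglyMeasurable_clm_apply' {α : Type*} [MeasurableSpace α]
    {E : Type*} [NormedAddCommGroup E] [NormedSpace ℂ E]
    (k : α → E →L[ℂ] ℂ) (hk : ∀ ψ, StronglyMeasurable fun x => k x ψ)
    {g : α → E} (hg : StronglyMeasurable g) :
    StronglyMeasurable fun x => k x (g x) := by
  have hsimple : ∀ s : SimpleFunc α E, StronglyMeasurable fun x => k x (s x) := by
    intro s
    refine SimpleFunc.induction ?_ ?_ s
    · intro c t ht
      have heq : (fun x => k x ((SimpleFunc.piecewise t ht (SimpleFunc.const α c)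
          (SimpleFunc.const α 0)) x)) = fun x => t.indicator (fun x => k x c) x := by
        ext x
        by_cases hx : x ∈ t <;>
          simp [SimpleFunc.piecewise_apply, hx, Set.indicator, map_zero]
      rw [heq]
      exact (hk c).indicator ht
    · intro f f' _ hf hf'
      have heq : (fun x => k x ((f + f') x)) = fun x => k x (f x) + k x (f' x) := by
        ext x; simp [map_add]
      rw [heq]
      exact hf.add hf'
  refine stronglyMeasurable_of_tendsto atTop (fun n => hsimple (hg.approx n))
    (tendsto_pi_nhds.2 fun x => ?_)
  exact ((k x).continuous.tendsto _).comp (hg.tendsto_approx x)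

end

set_option maxHeartbeats 2000000 in
/-- If `T : E → L^{p'}(ℝ^d; ℂ)` is a bounded operator on a separable complex Banach space `E`
and there is a nonnegative `b ∈ L^{p'}(ℝ^d)` with `|(Tψ)(x)| ≤ b(x)‖ψ‖` a.e. for every `ψ`,
then there is a continuous linear functional `F` on the Bochner space `L^p(ℝ^d; E)`, of norm
at most `‖b‖_{L^{p'}}`, such that `F(φ·ψ) = ∫ (Tψ)(x) φ(x) dx` for all `φ ∈ L^p(ℝ^d; ℂ)`,
`ψ ∈ E`. -/
theorem bilinear_extension_of_dominated
    (d : ℕ) (p p' : ℝ) (hp : 1 < p) (hconj : 1 / p + 1 / p' = 1)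
    (E : Type*) [NormedAddCommGroup E] [NormedSpace ℂ E] [CompleteSpace E]
    [TopologicalSpace.SeparableSpace E]
    [Fact (1 ≤ ENNReal.ofReal p)] [Fact (1 ≤ ENNReal.ofReal p')]
    (T : E →L[ℂ] Lp ℂ (ENNReal.ofReal p') (volume : Measure (Fin d → ℝ)))
    (b : (Fin d → ℝ) → ℝ) (hb_nonneg : ∀ x, 0 ≤ b x)
    (hb_mem : MemLp b (ENNReal.ofReal p') (volume : Measure (Fin d → ℝ)))
    (hT_dom : ∀ ψ : E, ∀ᵐ x ∂(volume : Measure (Fin d → ℝ)),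
      ‖(T ψ : (Fin d → ℝ) → ℂ) x‖ ≤ b x * ‖ψ‖) :
    ∃ F : Lp E (ENNReal.ofReal p) (volume : Measure (Fin d → ℝ)) →L[ℂ] ℂ,
      ‖F‖ ≤ (eLpNorm b (ENNReal.ofReal p') (volume : Measure (Fin d → ℝ))).toReal ∧
      ∀ (φ : Lp ℂ (ENNReal.ofReal p) (volume : Measure (Fin d → ℝ))) (ψ : E)
        (g : Lp E (ENNReal.ofReal p) (volume : Measure (Fin d → ℝ))),
        (g : (Fin d → ℝ) → E) =ᵐ[volume] (fun x => φ x • ψ) →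
        F g = ∫ x : Fin d → ℝ, (T ψ : (Fin d → ℝ) → ℂ) x * (φ : (Fin d → ℝ) → ℂ) x := by
  classical
  have hpnonneg : (0:ℝ) ≤ p := by linarith
  have hpq : Real.HolderConjugate p p' :=
    Real.holderConjugate_iff.mpr ⟨hp, by rw [← one_div, ← one_div]; exact hconj⟩
  have hp'pos : 0 < p' := hpq.symm.pos
  have hEne : Nonempty E := ⟨0⟩
  set u : ℕ → E := TopologicalSpace.denseSeq E with hudef
  have hu : DenseRange u := TopologicalSpace.denseRange_denseSeq E
  set b' : (Fin d → ℝ) → ℝ := hb_mem.1.mk b with hb'def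
  have hb'sm : StronglyMeasurable b' := hb_mem.1.stronglyMeasurable_mk
  have hbb' : b =ᵐ[volume] b' := hb_mem.1.ae_eq_mk
  set Φ : ℕ → (Fin d → ℝ) → ℂ :=
    fun n => ((T (u n) : Lp ℂ (ENNReal.ofReal p') volume) : (Fin d → ℝ) → ℂ) with hΦdef
  have hΦ : ∀ n, StronglyMeasurable (Φ n) := fun n => Lp.stronglyMeasurable _
  obtain ⟨k, hkbd, hksm, hklim⟩ := kernel_construction u hu b' hb'sm Φ hΦ
  set B : (Fin d → ℝ) → ℝ := fun x => max (b' x) 0 with hBdef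
  have hBsm : StronglyMeasurable B := (hb'sm.measurable.max measurable_const).stronglyMeasurable
  have hBb : B =ᵐ[volume] b := by
    filter_upwards [hbb'] with x hx
    rw [hBdef]
    simp only
    rw [← hx, max_eq_left (hb_nonneg x)]
  -- the good set has full measure
  have hGoodae : ∀ᵐ x ∂volume, ∀ a n m : ℕ, ∀ q r : ℚ × ℚ,
      ‖Φ a x - ratC q * Φ n x - ratC r * Φ m x‖ ≤
        b' x * ‖u a - ratC q • u n - ratC r • u m‖ := by
    rw [ae_all_iff]; intro a
    rw [ae_all_iff]; intro n
    rw [ae_all_iff]; intro m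
    rw [ae_all_iff]; intro q
    rw [ae_all_iff]; intro r
    have hTθ : T (u a - ratC q • u n - ratC r • u m)
        = T (u a) - ratC q • T (u n) - ratC r • T (u m) := by
      simp [map_sub, _root_.map_smul]
    have h2 : ((T (u a - ratC q • u n - ratC r • u m) : Lp ℂ (ENNReal.ofReal p') volume) :
          (Fin d → ℝ) → ℂ)
        =ᵐ[volume] fun x => Φ a x - ratC q * Φ n x - ratC r * Φ m x := by
      rw [hTθ]
      filter_upwards [Lp.coeFn_sub (T (u a) - ratC q • T (u n)) (ratC r • T (u m)),
        Lp.coeFn_sub (T (u a)) (ratC q • T (u n)),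
        Lp.coeFn_smul (ratC q) (T (u n)), Lp.coeFn_smul (ratC r) (T (u m))] with x e1 e2 e3 e4
      rw [e1, Pi.sub_apply, e2, Pi.sub_apply, e3, e4, Pi.smul_apply, Pi.smul_apply,
        smul_eq_mul, smul_eq_mul]
    filter_upwards [hT_dom (u a - ratC q • u n - ratC r • u m), h2, hbb'] with x e1 e2 e3
    rw [← e2, ← e3]
    simpa using e1
  -- pointwise identification of the kernel with T
  have hkey : ∀ ψ : E, (fun x => k x ψ) =ᵐ[volume]
      ((T ψ : Lp ℂ (ENNReal.ofReal p') volume) : (Fin d → ℝ) → ℂ) := by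
    intro ψ
    have hc0 : ∀ j : ℕ, ∃ n, dist ψ (u n) < 1 / ((j:ℝ) + 1) := fun j =>
      hu.exists_dist_lt ψ (by positivity)
    choose c hcspec using hc0
    have hctend : Tendsto (fun j => u (c j)) atTop (nhds ψ) := by
      rw [tendsto_iff_dist_tendsto_zero]
      refine squeeze_zero (fun j => dist_nonneg) (fun j => ?_)
        tendsto_one_div_add_atTop_nhds_zero_nat
      rw [dist_comm]; exact (hcspec j).le
    have hdom : ∀ᵐ x ∂volume, ∀ j : ℕ,
        ‖((T ψ : Lp ℂ (ENNReal.ofReal p') volume) : (Fin d → ℝ) → ℂ) x - Φ (c j) x‖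
          ≤ b x * ‖ψ - u (c j)‖ := by
      rw [ae_all_iff]
      intro j
      have h1 := hT_dom (ψ - u (c j))
      have hsub : T (ψ - u (c j)) = T ψ - T (u (c j)) := map_sub T _ _
      rw [hsub] at h1
      filter_upwards [h1, Lp.coeFn_sub (T ψ) (T (u (c j)))] with x e1 e2
      rw [e2, Pi.sub_apply] at e1
      simpa using e1
    filter_upwards [hGoodae, hdom] with x hx hd
    have l1 : Tendsto (fun j => Φ (c j) x) atTop (nhds (k x ψ)) := hklim x hx ψ c hctend
    have l2 : Tendsto (fun j => Φ (c j) x) atTop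
        (nhds (((T ψ : Lp ℂ (ENNReal.ofReal p') volume) : (Fin d → ℝ) → ℂ) x)) := by
      refine Filter.Tendsto.congr_dist (f₁ := fun _ : ℕ =>
        ((T ψ : Lp ℂ (ENNReal.ofReal p') volume) : (Fin d → ℝ) → ℂ) x) tendsto_const_nhds ?_
      refine squeeze_zero (g := fun j => |b x| * ‖ψ - u (c j)‖) (fun j => dist_nonneg)
        (fun j => ?_) ?_
      · rw [dist_eq_norm]
        exact (hd j).trans (mul_le_mul_of_nonneg_right (le_abs_self _) (norm_nonneg _))
      · have h1 : Tendsto (fun j => ψ - u (c j)) atTop (nhds (ψ - ψ)) :=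
          tendsto_const_nhds.sub hctend
        rw [sub_self] at h1
        simpa using h1.norm.const_mul |b x|
    exact tendsto_nhds_unique l1 l2
  -- integrability and bounds
  have hptoReal : (ENNReal.ofReal p).toReal = p := ENNReal.toReal_ofReal hpnonneg
  have hp'toReal : (ENNReal.ofReal p').toReal = p' := ENNReal.toReal_ofReal hp'pos.le
  have hpne0 : ENNReal.ofReal p ≠ 0 := by
    simp only [ne_eq, ENNReal.ofReal_eq_zero, not_le]; linarith
  have hp'ne0 : ENNReal.ofReal p' ≠ 0 := by
    simp only [ne_eq, ENNReal.ofReal_eq_zero, not_le]; linarith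
  have hBlp : eLpNorm B (ENNReal.ofReal p') volume = eLpNorm b (ENNReal.ofReal p') volume :=
    eLpNorm_congr_ae hBb
  have hlint : ∀ g : Lp E (ENNReal.ofReal p) volume,
      ∫⁻ x, (‖k x ((g : (Fin d → ℝ) → E) x)‖₊ : ℝ≥0∞) ∂volume ≤
        eLpNorm b (ENNReal.ofReal p') volume * eLpNorm (g : (Fin d → ℝ) → E) (ENNReal.ofReal p) volume := by
    intro g
    have hpt : ∀ x, (‖k x ((g : (Fin d → ℝ) → E) x)‖₊ : ℝ≥0∞) ≤
        (‖B x‖₊ : ℝ≥0∞) * (‖(g : (Fin d → ℝ) → E) x‖₊ : ℝ≥0∞) := by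
      intro x
      calc (‖k x ((g : (Fin d → ℝ) → E) x)‖₊ : ℝ≥0∞)
          = ENNReal.ofReal ‖k x ((g : (Fin d → ℝ) → E) x)‖ :=
            (ofReal_norm _).symm
        _ ≤ ENNReal.ofReal (‖B x‖ * ‖(g : (Fin d → ℝ) → E) x‖) := by
            refine ENNReal.ofReal_le_ofReal ?_
            have h := hkbd x ((g : (Fin d → ℝ) → E) x)
            rwa [Real.norm_of_nonneg (le_max_right (b' x) 0)]
        _ = ENNReal.ofReal ‖B x‖ * ENNReal.ofReal ‖(g : (Fin d → ℝ) → E) x‖ :=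
            ENNReal.ofReal_mul (norm_nonneg _)
        _ = _ := by simp only [ofReal_norm, enorm_eq_nnnorm]
    have hholder := ENNReal.lintegral_mul_le_Lp_mul_Lq volume hpq.symm
      hBsm.enorm.aemeasurable
      (Lp.stronglyMeasurable g).enorm.aemeasurable
    simp only [Pi.mul_apply] at hholder
    calc ∫⁻ x, (‖k x ((g : (Fin d → ℝ) → E) x)‖₊ : ℝ≥0∞) ∂volume
        ≤ ∫⁻ x, (‖B x‖₊ : ℝ≥0∞) * (‖(g : (Fin d → ℝ) → E) x‖₊ : ℝ≥0∞) ∂volume := lintegral_mono hpt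
      _ ≤ (∫⁻ x, (‖B x‖₊ : ℝ≥0∞) ^ p' ∂volume) ^ (1 / p') *
            (∫⁻ x, (‖(g : (Fin d → ℝ) → E) x‖₊ : ℝ≥0∞) ^ p ∂volume) ^ (1 / p) := hholder
      _ = eLpNorm B (ENNReal.ofReal p') volume *
            eLpNorm (g : (Fin d → ℝ) → E) (ENNReal.ofReal p) volume := by
          rw [eLpNorm_eq_lintegral_rpow_enorm_toReal hp'ne0 ENNReal.ofReal_ne_top,
            eLpNorm_eq_lintegral_rpow_enorm_toReal hpne0 ENNReal.ofReal_ne_top, hptoReal, hp'toReal]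
          rfl
      _ = _ := by rw [hBlp]
  have hint : ∀ g : Lp E (ENNReal.ofReal p) volume,
      Integrable (fun x => k x ((g : (Fin d → ℝ) → E) x)) volume := by
    intro g
    refine ⟨(stronglyMeasurable_clm_apply' k hksm
      (Lp.stronglyMeasurable g)).aestronglyMeasurable, ?_⟩
    exact lt_of_le_of_lt (hlint g)
      (ENNReal.mul_lt_top hb_mem.2 (Lp.eLpNorm_lt_top g))
  have hbound : ∀ g : Lp E (ENNReal.ofReal p) volume,
      ‖∫ x, k x ((g : (Fin d → ℝ) → E) x) ∂volume‖ ≤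
        (eLpNorm b (ENNReal.ofReal p') volume).toReal * ‖g‖ := by
    intro g
    calc ‖∫ x, k x ((g : (Fin d → ℝ) → E) x) ∂volume‖
        ≤ (∫⁻ x, ENNReal.ofReal ‖k x ((g : (Fin d → ℝ) → E) x)‖ ∂volume).toReal :=
          norm_integral_le_lintegral_norm _
      _ = (∫⁻ x, (‖k x ((g : (Fin d → ℝ) → E) x)‖₊ : ℝ≥0∞) ∂volume).toReal := by
          congr 1; exact lintegral_congr fun x => ofReal_norm _
      _ ≤ (eLpNorm b (ENNReal.ofReal p') volume *
            eLpNorm (g : (Fin d → ℝ) → E) (ENNReal.ofReal p) volume).toReal :=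
          ENNReal.toReal_mono
            (ENNReal.mul_ne_top hb_mem.2.ne (Lp.eLpNorm_lt_top g).ne) (hlint g)
      _ = (eLpNorm b (ENNReal.ofReal p') volume).toReal * ‖g‖ := by
          rw [ENNReal.toReal_mul, Lp.norm_def]
  set F0 : Lp E (ENNReal.ofReal p) volume →ₗ[ℂ] ℂ :=
    { toFun := fun g => ∫ x, k x ((g : (Fin d → ℝ) → E) x) ∂volume
      map_add' := by
        intro g h
        have hae : (fun x => k x (((g + h : Lp E (ENNReal.ofReal p) volume) :
            (Fin d → ℝ) → E) x)) =ᵐ[volume]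
            fun x => k x ((g : (Fin d → ℝ) → E) x) + k x ((h : (Fin d → ℝ) → E) x) := by
          filter_upwards [Lp.coeFn_add g h] with x hx
          rw [hx, Pi.add_apply, map_add]
        have heq := integral_congr_ae hae
        rw [integral_add (hint g) (hint h)] at heq
        exact heq
      map_smul' := by
        intro a g
        have hae : (fun x => k x (((a • g : Lp E (ENNReal.ofReal p) volume) :
            (Fin d → ℝ) → E) x)) =ᵐ[volume]
            fun x => a • k x ((g : (Fin d → ℝ) → E) x) := by
          filter_upwards [Lp.coeFn_smul a g] with x hx
          rw [hx, Pi.smul_apply, _root_.map_smul]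
        have heq := integral_congr_ae hae
        rw [integral_smul] at heq
        exact heq } with hF0def
  refine ⟨LinearMap.mkContinuous F0 ((eLpNorm b (ENNReal.ofReal p') volume).toReal) hbound,
    LinearMap.mkContinuous_norm_le F0 ENNReal.toReal_nonneg hbound, ?_⟩
  intro φ ψ g hg
  have hae2 : (fun x => k x ((g : (Fin d → ℝ) → E) x)) =ᵐ[volume]
      fun x => ((T ψ : Lp ℂ (ENNReal.ofReal p') volume) : (Fin d → ℝ) → ℂ) x *
        (φ : (Fin d → ℝ) → ℂ) x := by
    filter_upwards [hg, hkey ψ] with x h1 h2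
    rw [h1, (k x).map_smul, smul_eq_mul, h2, mul_comm]
  show ∫ x, k x ((g : (Fin d → ℝ) → E) x) ∂volume = _
  exact integral_congr_ae hae2
end

section
/- Let p ∈ (1,∞) with conjugate exponent p′ (1/p + 1/p′ = 1), let E be a separable complex Banach space, and let T : E → L^{p′}(ℝ^d; ℂ) be a bounded linear operator. Suppose there exists a continuous linear functional F on the Bochner space L^p(ℝ^d; E) such that for every φ ∈ L^p(ℝ^d; ℂ) and every ψ ∈ E, F(x ↦ φ(x)·ψ) = ∫_{ℝ^d} (Tψ)(x)·φ(x) dx. Then there exists a nonnegative function b ∈ L^{p′}(ℝ^d) such that for every ψ ∈ E, |(Tψ)(x)| ≤ b(x)·‖ψ‖_E for almost every x ∈ ℝ^d. -/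
open MeasureTheory
open scoped ENNReal NNReal

lemma aux_dual {X : Type*} [MeasurableSpace X] (μ : Measure X) {p p' : ℝ}
    (hpc : Real.HolderConjugate p p') (C : ℝ) (M : X → ℝ) (hMmeas : Measurable M)
    (hM0 : ∀ x, 0 ≤ M x) (hMp : MemLp M (ENNReal.ofReal p') μ)
    (hdual : ∀ φ : X → ℝ, Measurable φ → (∀ x, 0 ≤ φ x) → MemLp φ (ENNReal.ofReal p) μ →
      ∫ x, M x * φ x ∂μ ≤ C * (eLpNorm φ (ENNReal.ofReal p) μ).toReal) :
    eLpNorm M (ENNReal.ofReal p') μ ≤ ENNReal.ofReal C := by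
  have hp0 : 0 < p := hpc.pos
  have hp'0 : 0 < p' := hpc.symm.pos
  have hq0 : ENNReal.ofReal p ≠ 0 := by simp [ENNReal.ofReal_eq_zero, not_le, hp0]
  have hq'0 : ENNReal.ofReal p' ≠ 0 := by simp [ENNReal.ofReal_eq_zero, not_le, hp'0]
  have htR : (ENNReal.ofReal p).toReal = p := ENNReal.toReal_ofReal hp0.le
  have htR' : (ENNReal.ofReal p').toReal = p' := ENNReal.toReal_ofReal hp'0.le
  set I : ℝ≥0∞ := ∫⁻ x, (ENNReal.ofReal (M x)) ^ p' ∂μ with hI_def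
  have hofReal : ∀ x, ((‖M x‖₊ : ℝ≥0∞)) = ENNReal.ofReal (M x) := fun x => by
    rw [← enorm_eq_nnnorm, ← ofReal_norm, Real.norm_of_nonneg (hM0 x)]
  have heLpM : eLpNorm M (ENNReal.ofReal p') μ = I ^ (1 / p') := by
    rw [eLpNorm_eq_lintegral_rpow_enorm_toReal hq'0 ENNReal.ofReal_ne_top, htR']
    simp_rw [enorm_eq_nnnorm, hofReal]
    rfl
  have hI_ne_top : I ≠ ∞ := by
    intro h
    have := hMp.2
    rw [heLpM, h, ENNReal.top_rpow_of_pos (by positivity)] at this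
    exact (lt_irrefl _ this).elim
  -- the test function
  set φ : X → ℝ := fun x => M x ^ (p' - 1) with hφ_def
  have hφmeas : Measurable φ := ((Real.continuous_rpow_const (by linarith [hpc.symm.lt] : (0:ℝ) ≤ p' - 1)).measurable.comp hMmeas)
  have hφ0 : ∀ x, 0 ≤ φ x := fun x => Real.rpow_nonneg (hM0 x) _
  have hkey : ∀ x, (ENNReal.ofReal (φ x)) ^ p = ENNReal.ofReal (M x) ^ p' := by
    intro x
    show (ENNReal.ofReal (M x ^ (p' - 1))) ^ p = _
    rw [← ENNReal.ofReal_rpow_of_nonneg (hM0 x)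
      (by linarith [hpc.symm.lt] : (0:ℝ) ≤ p' - 1),
      ← ENNReal.rpow_mul, hpc.symm.sub_one_mul_conj]
  have heLpφ : eLpNorm φ (ENNReal.ofReal p) μ = I ^ (1 / p) := by
    rw [eLpNorm_eq_lintegral_rpow_enorm_toReal hq0 ENNReal.ofReal_ne_top, htR]
    congr 1
    refine lintegral_congr fun x => ?_
    rw [← ofReal_norm, Real.norm_of_nonneg (hφ0 x), hkey]
  have hφmem : MemLp φ (ENNReal.ofReal p) μ := by
    refine ⟨hφmeas.aestronglyMeasurable, ?_⟩
    rw [heLpφ]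
    exact ENNReal.rpow_lt_top_of_nonneg (by positivity) hI_ne_top
  have hMul : ∀ x, M x * φ x = M x ^ p' := by
    intro x
    rcases eq_or_lt_of_le (hM0 x) with h | h
    · rw [← h, Real.zero_rpow hp'0.ne', zero_mul]
    · rw [hφ_def]
      nth_rewrite 1 [← Real.rpow_one (M x)]
      rw [← Real.rpow_add h]
      ring_nf
  have hint : ∫ x, M x * φ x ∂μ = I.toReal := by
    have h1 : ∫ x, M x * φ x ∂μ = ∫ x, M x ^ p' ∂μ :=
      integral_congr_ae (Filter.Eventually.of_forall hMul)
    have h2 := integral_eq_lintegral_of_nonneg_ae (μ := μ) (f := fun x => M x ^ p')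
      (Filter.Eventually.of_forall fun x => Real.rpow_nonneg (hM0 x) _)
      (((Real.continuous_rpow_const hp'0.le).measurable.comp hMmeas)).aestronglyMeasurable
    rw [h1, h2]
    congr 1
    refine lintegral_congr fun x => ?_
    rw [← ENNReal.ofReal_rpow_of_nonneg (hM0 x) hp'0.le]
  -- apply hypothesis
  have hmain := hdual φ hφmeas hφ0 hφmem
  rw [hint, heLpφ] at hmain
  rcases eq_or_ne I 0 with hI0 | hI0
  · rw [heLpM, hI0, ENNReal.zero_rpow_of_pos (by positivity)]
    exact bot_le
  · set i : ℝ := I.toReal with hi_def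
    have hi0 : 0 < i := ENNReal.toReal_pos hI0 hI_ne_top
    have htr : (I ^ (1/p)).toReal = i ^ (1/p) := by
      rw [hi_def, ENNReal.toReal_rpow]
    rw [htr] at hmain
    have hsplit : i = i ^ (1/p) * i ^ (1/p') := by
      rw [← Real.rpow_add hi0, one_div, one_div, hpc.inv_add_inv_eq_one, Real.rpow_one]
    have hpow_pos : 0 < i ^ (1/p) := Real.rpow_pos_of_pos hi0 _
    have hfin : i ^ (1/p') ≤ C := by
      have : i ^ (1/p) * i ^ (1/p') ≤ C * i ^ (1/p) := by rw [← hsplit]; exact hmain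
      rw [mul_comm (C : ℝ) _] at this
      exact le_of_mul_le_mul_left this hpow_pos
    rw [heLpM, ← ENNReal.ofReal_toReal hI_ne_top, ← hi_def,
      ENNReal.ofReal_rpow_of_nonneg (ENNReal.toReal_nonneg) (by positivity)]
    exact ENNReal.ofReal_le_ofReal hfin

lemma coeFn_finset_sum {α E : Type*} [MeasurableSpace α] {μ : Measure α}
    [NormedAddCommGroup E] {p : ℝ≥0∞} {ι : Type*} (s : Finset ι) (f : ι → Lp E p μ) :
    ⇑(∑ i ∈ s, f i) =ᵐ[μ] fun x => ∑ i ∈ s, f i x := by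
  classical
  induction s using Finset.induction_on with
  | empty => simp only [Finset.sum_empty]; exact Lp.coeFn_zero E p μ
  | insert a s ha ih =>
    rw [Finset.sum_insert ha]
    filter_upwards [Lp.coeFn_add (f a) (∑ i ∈ s, f i), ih] with x h1 h2
    simp only [h1, Pi.add_apply, h2, Finset.sum_insert ha]

/-- If `T : E → L^{p'}(ℝ^d; ℂ)` is a bounded operator on a separable complex Banach space `E`
and there is a continuous linear functional `F` on the Bochner space `L^p(ℝ^d; E)` with
`F(φ·ψ) = ∫ (Tψ)(x) φ(x) dx` for all `φ ∈ L^p(ℝ^d; ℂ)`, `ψ ∈ E`, then there is a nonnegative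
`b ∈ L^{p'}(ℝ^d)` such that for every `ψ ∈ E`, `|(Tψ)(x)| ≤ b(x)‖ψ‖` for a.e. `x`. -/
theorem dominating_function_of_extension
    (d : ℕ) (p p' : ℝ) (hp : 1 < p) (hconj : 1 / p + 1 / p' = 1)
    (E : Type*) [NormedAddCommGroup E] [NormedSpace ℂ E] [CompleteSpace E]
    [TopologicalSpace.SeparableSpace E]
    [Fact (1 ≤ ENNReal.ofReal p)] [Fact (1 ≤ ENNReal.ofReal p')]
    (T : E →L[ℂ] Lp ℂ (ENNReal.ofReal p') (volume : Measure (Fin d → ℝ)))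
    (F : Lp E (ENNReal.ofReal p) (volume : Measure (Fin d → ℝ)) →L[ℂ] ℂ)
    (hF : ∀ (φ : Lp ℂ (ENNReal.ofReal p) (volume : Measure (Fin d → ℝ))) (ψ : E)
      (g : Lp E (ENNReal.ofReal p) (volume : Measure (Fin d → ℝ))),
      (g : (Fin d → ℝ) → E) =ᵐ[volume] (fun x => φ x • ψ) →
      F g = ∫ x : Fin d → ℝ, (T ψ : (Fin d → ℝ) → ℂ) x * (φ : (Fin d → ℝ) → ℂ) x) :
    ∃ b : (Fin d → ℝ) → ℝ, (∀ x, 0 ≤ b x) ∧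
      MemLp b (ENNReal.ofReal p') (volume : Measure (Fin d → ℝ)) ∧
      ∀ ψ : E, ∀ᵐ x ∂(volume : Measure (Fin d → ℝ)),
        ‖(T ψ : (Fin d → ℝ) → ℂ) x‖ ≤ b x * ‖ψ‖ := by
  classical
  have hpc : Real.HolderConjugate p p' := Real.holderConjugate_iff.mpr ⟨hp, by rw [← one_div, ← one_div]; exact hconj⟩
  have hp0 : 0 < p := hpc.pos
  have hp'0 : 0 < p' := hpc.symm.pos
  have hq'0 : ENNReal.ofReal p' ≠ 0 := by simp [ENNReal.ofReal_eq_zero, not_le, hp'0]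
  have htR' : (ENNReal.ofReal p').toReal = p' := ENNReal.toReal_ofReal hp'0.le
  haveI : Nonempty E := ⟨0⟩
  set v : ℕ → E := TopologicalSpace.denseSeq E with hv_def
  have hv : DenseRange v := TopologicalSpace.denseRange_denseSeq E
  have hTmeas : ∀ n, AEStronglyMeasurable (T (v n) : (Fin d → ℝ) → ℂ) volume :=
    fun n => Lp.aestronglyMeasurable _
  set g : ℕ → (Fin d → ℝ) → ℂ := fun n => (hTmeas n).mk _ with hg_def
  have hgmeas : ∀ n, StronglyMeasurable (g n) := fun n => (hTmeas n).stronglyMeasurable_mk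
  have hgeq : ∀ n, (T (v n) : (Fin d → ℝ) → ℂ) =ᵐ[volume] g n := fun n => (hTmeas n).ae_eq_mk
  have hgm : ∀ n, Measurable (g n) := fun n => (hgmeas n).measurable
  set h : ℕ → (Fin d → ℝ) → ℝ := fun n x => ‖g n x‖ / ‖v n‖ with hh_def
  have hhmeas : ∀ n, Measurable (h n) := fun n => ((hgm n).norm).div_const _
  have hh0 : ∀ n x, 0 ≤ h n x := fun n x => div_nonneg (norm_nonneg _) (norm_nonneg _)
  have hhmem : ∀ n, MemLp (h n) (ENNReal.ofReal p') volume := by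
    intro n
    have h2 := ((Lp.memLp (T (v n))).ae_eq (hgeq n)).norm
    have h3 := h2.const_mul (‖v n‖⁻¹)
    refine h3.ae_eq (Filter.Eventually.of_forall fun x => ?_)
    simp [hh_def, div_eq_inv_mul]
  -- the finite maxima
  set MN : ℕ → (Fin d → ℝ) → ℝ :=
    fun N => (Finset.range (N + 1)).sup' Finset.nonempty_range_add_one h with hMN_def
  have hMN_apply : ∀ N x, MN N x = (Finset.range (N + 1)).sup'
      Finset.nonempty_range_add_one (fun n => h n x) := by
    intro N x
    rw [hMN_def]
    exact Finset.sup'_apply _ _ _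
  have hMNmeas : ∀ N, Measurable (MN N) := by
    intro N
    have hm : Measurable ((Finset.range (N + 1)).sup' Finset.nonempty_range_add_one h) :=
      Finset.measurable_sup' Finset.nonempty_range_add_one fun n _ => hhmeas n
    rw [hMN_def]
    exact hm
  have h_le_MN : ∀ n N, n ≤ N → ∀ x, h n x ≤ MN N x := by
    intro n N hn x
    rw [hMN_apply]
    exact Finset.le_sup' (fun k => h k x) (Finset.mem_range.mpr (Nat.lt_succ_of_le hn))
  have hMN0 : ∀ N x, 0 ≤ MN N x := fun N x => le_trans (hh0 0 x) (h_le_MN 0 N (Nat.zero_le N) x)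
  have hMNmono : ∀ N₁ N₂, N₁ ≤ N₂ → ∀ x, MN N₁ x ≤ MN N₂ x := by
    intro N₁ N₂ hN x
    rw [hMN_apply, hMN_apply]
    refine Finset.sup'_le _ _ fun n hn => ?_
    have hn' := Finset.mem_range.mp hn
    exact Finset.le_sup' (fun k => h k x) (Finset.mem_range.mpr (by omega))
  have hMNmem : ∀ N, MemLp (MN N) (ENNReal.ofReal p') volume := by
    intro N
    refine MemLp.of_le (memLp_finsetSum (Finset.range (N + 1)) (f := h)
      (fun n _ => hhmem n)) ((hMNmeas N).aestronglyMeasurable) ?_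
    refine Filter.Eventually.of_forall fun x => ?_
    rw [Real.norm_of_nonneg (hMN0 N x), hMN_apply]
    refine le_trans (Finset.sup'_le _ _ fun n hn => Finset.single_le_sum
      (f := fun n => h n x) (fun i _ => hh0 i x) hn) ?_
    rw [Real.norm_of_nonneg (Finset.sum_nonneg fun i _ => hh0 i x)]
  -- the core duality estimate
  have hest : ∀ N, eLpNorm (MN N) (ENNReal.ofReal p') volume ≤ ENNReal.ofReal ‖F‖ := by
    intro N
    refine aux_dual volume hpc ‖F‖ (MN N) (hMNmeas N) (hMN0 N) (hMNmem N) ?_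
    intro φ hφmeas hφ0 hφmem
    -- the measurable partition by the first index attaining the maximum
    set A : ℕ → Set (Fin d → ℝ) :=
      fun n => {x | h n x = MN N x ∧ ∀ k < n, h k x ≠ MN N x} with hA_def
    have hAmeas : ∀ n, MeasurableSet (A n) := by
      intro n
      have hrw : A n = {x | h n x = MN N x} ∩ ⋂ (k : ℕ) (_ : k < n), {x | h k x = MN N x}ᶜ := by
        ext x
        simp [hA_def]
      rw [hrw]
      refine (measurableSet_eq_fun (hhmeas n) (hMNmeas N)).inter ?_
      exact MeasurableSet.iInter fun k => MeasurableSet.iInter fun _ =>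
        (measurableSet_eq_fun (hhmeas k) (hMNmeas N)).compl
    have hcover : ∀ x, ∃ n, n ≤ N ∧ x ∈ A n ∧ ∀ m, m ≠ n → x ∉ A m := by
      intro x
      obtain ⟨n, hn_mem, hn_eq⟩ := Finset.exists_mem_eq_sup'
        (Finset.nonempty_range_add_one : (Finset.range (N+1)).Nonempty) (fun n => h n x)
      have hex : ∃ m, h m x = MN N x := ⟨n, by rw [hMN_apply]; exact hn_eq.symm⟩
      have hn0_spec : h (Nat.find hex) x = MN N x := Nat.find_spec hex
      have hn0_min : ∀ k < Nat.find hex, h k x ≠ MN N x := fun k hk => Nat.find_min hex hk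
      have hn0_le : Nat.find hex ≤ N := by
        have h1 := Nat.find_min' hex (show h n x = MN N x by rw [hMN_apply]; exact hn_eq.symm)
        have hnN : n ≤ N := Nat.lt_succ_iff.mp (Finset.mem_range.mp hn_mem)
        omega
      refine ⟨Nat.find hex, hn0_le, ⟨hn0_spec, hn0_min⟩, ?_⟩
      intro m hm hmem
      rcases lt_or_gt_of_ne hm with hlt | hgt
      · exact hn0_min m hlt hmem.1
      · exact hmem.2 _ hgt hn0_spec
    have hsum_ind : ∀ (f : (Fin d → ℝ) → ℝ) (x : Fin d → ℝ),
        (∑ n ∈ Finset.range (N+1), (A n).indicator f x) = f x := by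
      intro f x
      obtain ⟨n, hnN, hxn, huniq⟩ := hcover x
      rw [Finset.sum_eq_single n]
      · exact Set.indicator_of_mem hxn f
      · intro m _ hmn
        exact Set.indicator_of_notMem (huniq m hmn) f
      · intro hnot
        exact absurd (Finset.mem_range.mpr (Nat.lt_succ_of_le hnN)) hnot
    -- the unimodular phase functions
    set u : ℕ → (Fin d → ℝ) → ℂ :=
      fun n x => if g n x = 0 then 1 else (starRingEnd ℂ) (g n x) / (‖g n x‖ : ℂ) with hu_def
    have humeas : ∀ n, Measurable (u n) := by
      intro n
      refine Measurable.ite ((hgm n) (measurableSet_singleton 0)) measurable_const ?_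
      exact ((Complex.continuous_conj.measurable).comp (hgm n)).div
        (Complex.measurable_ofReal.comp (hgm n).norm)
    have hu_norm : ∀ n x, ‖u n x‖ ≤ 1 := by
      intro n x
      show ‖if g n x = 0 then (1:ℂ) else (starRingEnd ℂ) (g n x) / (‖g n x‖ : ℂ)‖ ≤ 1
      by_cases hz : g n x = 0
      · simp [hz]
      · rw [if_neg hz, norm_div, RCLike.norm_conj, Complex.norm_real,
          Real.norm_of_nonneg (norm_nonneg _)]
        exact div_self_le_one _
    have hu_mul : ∀ n x, u n x * g n x = (‖g n x‖ : ℂ) := by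
      intro n x
      show (if g n x = 0 then (1:ℂ) else (starRingEnd ℂ) (g n x) / (‖g n x‖ : ℂ)) * g n x
        = (‖g n x‖ : ℂ)
      by_cases hz : g n x = 0
      · simp [hz]
      · rw [if_neg hz]
        have hz' : (‖g n x‖ : ℂ) ≠ 0 := by
          exact_mod_cast norm_ne_zero_iff.mpr hz
        rw [div_mul_eq_mul_div, div_eq_iff hz', mul_comm ((starRingEnd ℂ) (g n x)) (g n x),
          Complex.mul_conj]
        norm_cast
        rw [Complex.normSq_eq_norm_sq, sq]
    -- the (almost) normalized vectors
    set sr : ℕ → ℝ := fun n => if v n = 0 then 0 else ‖v n‖⁻¹ with hsr_def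
    set ψ' : ℕ → E := fun n => ((sr n : ℝ) : ℂ) • v n with hψ'_def
    have hψ'norm : ∀ n, ‖ψ' n‖ ≤ 1 := by
      intro n
      show ‖((sr n : ℝ) : ℂ) • v n‖ ≤ 1
      rw [norm_smul, Complex.norm_real]
      by_cases hvn : v n = 0
      · simp [hsr_def, hvn]
      · have : sr n = ‖v n‖⁻¹ := by rw [hsr_def]; simp [hvn]
        rw [this, Real.norm_of_nonneg (inv_nonneg.mpr (norm_nonneg _)),
          inv_mul_cancel₀ (norm_ne_zero_iff.mpr hvn)]
    have hsr_h : ∀ n x, sr n * ‖g n x‖ = h n x := by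
      intro n x
      show (if v n = 0 then (0:ℝ) else ‖v n‖⁻¹) * ‖g n x‖ = ‖g n x‖ / ‖v n‖
      by_cases hvn : v n = 0
      · rw [if_pos hvn, hvn, norm_zero, div_zero, zero_mul]
      · rw [if_neg hvn]
        rw [div_eq_inv_mul]
    -- the cut-off test functions
    set φC : ℕ → (Fin d → ℝ) → ℂ :=
      fun n => (A n).indicator (fun x => (φ x : ℂ) * u n x) with hφC_def
    have hφCmeas : ∀ n, Measurable (φC n) := fun n =>
      (((Complex.measurable_ofReal.comp hφmeas).mul (humeas n)).indicator (hAmeas n))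
    have hφC_le : ∀ n x, ‖φC n x‖ ≤ ‖φ x‖ := by
      intro n x
      show ‖(A n).indicator (fun x => (φ x : ℂ) * u n x) x‖ ≤ ‖φ x‖
      by_cases hx : x ∈ A n
      · rw [Set.indicator_of_mem hx, norm_mul, Complex.norm_real]
        calc ‖φ x‖ * ‖u n x‖ ≤ ‖φ x‖ * 1 :=
              mul_le_mul_of_nonneg_left (hu_norm n x) (norm_nonneg _)
          _ = ‖φ x‖ := mul_one _
      · rw [Set.indicator_of_notMem hx]
        simp
    have hφCmem : ∀ n, MemLp (φC n) (ENNReal.ofReal p) volume := fun n =>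
      hφmem.of_le ((hφCmeas n).aestronglyMeasurable)
        (Filter.Eventually.of_forall (hφC_le n))
    set Φ : ℕ → Lp ℂ (ENNReal.ofReal p) volume := fun n => (hφCmem n).toLp _ with hΦ_def
    have hΦcoe : ∀ n, ((Φ n : (Fin d → ℝ) → ℂ)) =ᵐ[volume] φC n := by
      intro n
      simp only [hΦ_def]
      exact MemLp.coeFn_toLp _
    set Gf : ℕ → (Fin d → ℝ) → E := fun n x => φC n x • ψ' n with hGf_def
    have hGfmem : ∀ n, MemLp (Gf n) (ENNReal.ofReal p) volume := by
      intro n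
      refine hφmem.of_le (((hφCmeas n).aestronglyMeasurable).smul_const _)
        (Filter.Eventually.of_forall fun x => ?_)
      show ‖φC n x • ψ' n‖ ≤ ‖φ x‖
      rw [norm_smul]
      calc ‖φC n x‖ * ‖ψ' n‖ ≤ ‖φ x‖ * 1 :=
            mul_le_mul (hφC_le n x) (hψ'norm n) (norm_nonneg _) (norm_nonneg _)
        _ = ‖φ x‖ := mul_one _
    set G : ℕ → Lp E (ENNReal.ofReal p) volume := fun n => (hGfmem n).toLp _ with hG_def
    have hGcoe : ∀ n, ((G n : (Fin d → ℝ) → E)) =ᵐ[volume] Gf n := by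
      intro n
      simp only [hG_def]
      exact MemLp.coeFn_toLp _
    have hFG : ∀ n, F (G n) =
        ∫ x, (T (ψ' n) : (Fin d → ℝ) → ℂ) x * (Φ n : (Fin d → ℝ) → ℂ) x ∂volume := by
      intro n
      refine hF (Φ n) (ψ' n) (G n) ?_
      filter_upwards [hGcoe n, hΦcoe n] with x h1 h2
      rw [h1, h2]
    have hTψ' : ∀ n, (T (ψ' n) : (Fin d → ℝ) → ℂ) =ᵐ[volume]
        fun x => ((sr n : ℝ) : ℂ) * g n x := by
      intro n
      have h1 : T (ψ' n) = ((sr n : ℝ) : ℂ) • T (v n) := by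
        have : ψ' n = ((sr n : ℝ) : ℂ) • v n := rfl
        rw [this]
        exact T.map_smul _ _
      rw [h1]
      filter_upwards [Lp.coeFn_smul (((sr n : ℝ)) : ℂ) (T (v n)), hgeq n] with x h2 h3
      rw [h2, Pi.smul_apply, smul_eq_mul, h3]
    have hFG2 : ∀ n, F (G n) =
        (((sr n * ∫ x, (A n).indicator (fun y => φ y * ‖g n y‖) x ∂volume) : ℝ) : ℂ) := by
      intro n
      rw [hFG n]
      have hint_eq : (fun x => (T (ψ' n) : (Fin d → ℝ) → ℂ) x * (Φ n : (Fin d → ℝ) → ℂ) x)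
          =ᵐ[volume] fun x => ((sr n : ℝ) : ℂ) *
            ((A n).indicator (fun y => ((φ y * ‖g n y‖ : ℝ) : ℂ)) x) := by
        filter_upwards [hTψ' n, hΦcoe n] with x h1 h2
        rw [h1, h2]
        show (((sr n : ℝ) : ℂ) * g n x) * (A n).indicator (fun x => (φ x : ℂ) * u n x) x = _
        by_cases hx : x ∈ A n
        · rw [Set.indicator_of_mem hx, Set.indicator_of_mem hx]
          push_cast
          rw [← hu_mul n x]
          ring
        · rw [Set.indicator_of_notMem hx, Set.indicator_of_notMem hx, mul_zero, mul_zero]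
      rw [integral_congr_ae hint_eq, integral_const_mul]
      have hcast : (fun x => ((A n).indicator (fun y => ((φ y * ‖g n y‖ : ℝ) : ℂ)) x))
          = fun x => (((A n).indicator (fun y => φ y * ‖g n y‖) x : ℝ) : ℂ) := by
        funext x
        by_cases hx : x ∈ A n
        · rw [Set.indicator_of_mem hx, Set.indicator_of_mem hx]
        · rw [Set.indicator_of_notMem hx, Set.indicator_of_notMem hx, Complex.ofReal_zero]
      rw [hcast]
      have h4 : ∫ x, (((A n).indicator (fun y => φ y * ‖g n y‖) x : ℝ) : ℂ) ∂volume
          = (((∫ x, (A n).indicator (fun y => φ y * ‖g n y‖) x ∂volume : ℝ)) : ℂ) :=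
        integral_ofReal
      rw [h4, ← Complex.ofReal_mul]
    -- integrability of φ * (MN N), by Hölder
    have hintg : Integrable (fun x => φ x * MN N x) volume := by
      have hpqr : (1 : ℝ≥0∞) / 1 = 1 / (ENNReal.ofReal p) + 1 / (ENNReal.ofReal p') := by
        simp only [one_div, inv_one]
        exact hpc.inv_add_inv_ennreal.symm
      have hs : MemLp (φ • (MN N)) 1 volume := by haveI := hpc.ennrealOfReal; exact MemLp.smul (hMNmem N) hφmem
      exact memLp_one_iff_integrable.mp hs
    have hintg_ind : ∀ n, Integrable ((A n).indicator (fun x => φ x * MN N x)) volume :=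
      fun n => hintg.indicator (hAmeas n)
    -- the sum of the pieces
    set SG := ∑ n ∈ Finset.range (N+1), G n with hSG_def
    have hSGcoe : ⇑SG =ᵐ[volume] fun x => ∑ n ∈ Finset.range (N+1), Gf n x := by
      have h1 := coeFn_finset_sum (Finset.range (N+1)) G
      have h2 : ∀ᵐ x ∂(volume : Measure (Fin d → ℝ)), ∀ n ∈ Finset.range (N+1),
          (G n : (Fin d → ℝ) → E) x = Gf n x := by
        rw [Filter.eventually_all_finset]
        intro n _
        exact hGcoe n
      rw [hSG_def]
      filter_upwards [h1, h2] with x hx1 hx2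
      rw [hx1]
      exact Finset.sum_congr rfl fun n hn => hx2 n hn
    have hSGnorm_ae : ∀ᵐ x ∂(volume : Measure (Fin d → ℝ)),
        ‖(SG : (Fin d → ℝ) → E) x‖ ≤ ‖φ x‖ := by
      filter_upwards [hSGcoe] with x hx
      rw [hx]
      calc ‖∑ n ∈ Finset.range (N+1), Gf n x‖
          ≤ ∑ n ∈ Finset.range (N+1), ‖Gf n x‖ := norm_sum_le _ _
        _ ≤ ∑ n ∈ Finset.range (N+1), (A n).indicator (fun _ => φ x) x := by
            refine Finset.sum_le_sum fun n _ => ?_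
            show ‖φC n x • ψ' n‖ ≤ _
            by_cases hxn : x ∈ A n
            · rw [Set.indicator_of_mem hxn, norm_smul]
              calc ‖φC n x‖ * ‖ψ' n‖ ≤ ‖φ x‖ * 1 :=
                    mul_le_mul (hφC_le n x) (hψ'norm n) (norm_nonneg _) (norm_nonneg _)
                _ = φ x := by rw [mul_one, Real.norm_of_nonneg (hφ0 x)]
            · rw [Set.indicator_of_notMem hxn]
              have hzero : φC n x = 0 := by
                show (A n).indicator (fun x => (φ x : ℂ) * u n x) x = 0
                exact Set.indicator_of_notMem hxn _
              rw [hzero, zero_smul, norm_zero]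
        _ = φ x := hsum_ind (fun _ => φ x) x
        _ ≤ ‖φ x‖ := le_abs_self _
    have hSGnorm : ‖SG‖ ≤ (eLpNorm φ (ENNReal.ofReal p) volume).toReal := by
      rw [Lp.norm_def]
      exact ENNReal.toReal_mono hφmem.2.ne (eLpNorm_mono_ae hSGnorm_ae)
    -- evaluate F on the sum
    have hFSG : F SG = ((∫ x, φ x * MN N x ∂volume : ℝ) : ℂ) := by
      rw [hSG_def, map_sum]
      have hterm : ∀ n ∈ Finset.range (N+1), F (G n) =
          ((∫ x, (A n).indicator (fun y => φ y * MN N y) x ∂volume : ℝ) : ℂ) := by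
        intro n _
        rw [hFG2 n]
        congr 1
        rw [← integral_const_mul]
        refine integral_congr_ae (Filter.Eventually.of_forall fun x => ?_)
        show sr n * (A n).indicator (fun y => φ y * ‖g n y‖) x
          = (A n).indicator (fun y => φ y * MN N y) x
        by_cases hx : x ∈ A n
        · rw [Set.indicator_of_mem hx, Set.indicator_of_mem hx]
          have hA1 : h n x = MN N x := hx.1
          rw [← hA1, ← hsr_h n x]
          ring
        · rw [Set.indicator_of_notMem hx, Set.indicator_of_notMem hx, mul_zero]
      rw [Finset.sum_congr rfl hterm]
      norm_cast
      rw [← integral_finset_sum _ (fun n _ => hintg_ind n)]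
      refine integral_congr_ae (Filter.Eventually.of_forall fun x => ?_)
      exact hsum_ind (fun y => φ y * MN N y) x
    -- the final chain of inequalities
    have habs : ‖F SG‖ ≤ ‖F‖ * ‖SG‖ := F.le_opNorm SG
    rw [hFSG, Complex.norm_real] at habs
    calc ∫ x, MN N x * φ x ∂(volume : Measure (Fin d → ℝ))
        = ∫ x, φ x * MN N x ∂(volume : Measure (Fin d → ℝ)) := by
          refine integral_congr_ae (Filter.Eventually.of_forall fun x => mul_comm _ _)
      _ ≤ ‖∫ x, φ x * MN N x ∂(volume : Measure (Fin d → ℝ))‖ := by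
          rw [Real.norm_eq_abs]; exact le_abs_self _
      _ ≤ ‖F‖ * ‖SG‖ := habs
      _ ≤ ‖F‖ * (eLpNorm φ (ENNReal.ofReal p) volume).toReal :=
          mul_le_mul_of_nonneg_left hSGnorm (norm_nonneg F)
  -- the dominating function
  set bE : (Fin d → ℝ) → ℝ≥0∞ := fun x => ⨆ N, ENNReal.ofReal (MN N x) with hbE_def
  have hbEmeas : Measurable bE :=
    Measurable.iSup fun N => (hMNmeas N).ennreal_ofReal
  have hFNmeas : ∀ N, Measurable (fun x => (ENNReal.ofReal (MN N x)) ^ p') :=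
    fun N => ENNReal.continuous_rpow_const.measurable.comp ((hMNmeas N).ennreal_ofReal)
  have hbound : ∫⁻ x, bE x ^ p' ∂(volume : Measure (Fin d → ℝ))
      ≤ (ENNReal.ofReal ‖F‖) ^ p' := by
    have hptws : ∀ x, bE x ^ p' = ⨆ N, (ENNReal.ofReal (MN N x)) ^ p' := by
      intro x
      rw [hbE_def]
      exact Monotone.map_iSup_of_continuousAt ENNReal.continuous_rpow_const.continuousAt
        (fun a b hab => ENNReal.rpow_le_rpow hab hp'0.le)
        (by simp [ENNReal.zero_rpow_of_pos hp'0])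
    have hmono : Monotone fun N x => (ENNReal.ofReal (MN N x)) ^ p' := by
      intro a c hac
      intro x
      exact ENNReal.rpow_le_rpow (ENNReal.ofReal_le_ofReal (hMNmono a c hac x)) hp'0.le
    calc ∫⁻ x, bE x ^ p' ∂(volume : Measure (Fin d → ℝ))
        = ∫⁻ x, ⨆ N, (ENNReal.ofReal (MN N x)) ^ p' ∂(volume : Measure (Fin d → ℝ)) := by
          exact lintegral_congr fun x => hptws x
      _ = ⨆ N, ∫⁻ x, (ENNReal.ofReal (MN N x)) ^ p' ∂(volume : Measure (Fin d → ℝ)) :=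
          lintegral_iSup hFNmeas hmono
      _ ≤ (ENNReal.ofReal ‖F‖) ^ p' := by
          refine iSup_le fun N => ?_
          have hI : ∫⁻ x, (ENNReal.ofReal (MN N x)) ^ p' ∂(volume : Measure (Fin d → ℝ))
              = (eLpNorm (MN N) (ENNReal.ofReal p') volume) ^ p' := by
            rw [eLpNorm_eq_lintegral_rpow_enorm_toReal hq'0 ENNReal.ofReal_ne_top, htR',
              ← ENNReal.rpow_mul, one_div, inv_mul_cancel₀ hp'0.ne', ENNReal.rpow_one]
            refine lintegral_congr fun x => ?_
            rw [← ofReal_norm, Real.norm_of_nonneg (hMN0 N x)]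
          rw [hI]
          exact ENNReal.rpow_le_rpow (hest N) hp'0.le
  set b : (Fin d → ℝ) → ℝ := fun x => (bE x).toReal with hb_def
  have hb0 : ∀ x, 0 ≤ b x := fun x => ENNReal.toReal_nonneg
  have hbE_fin : ∀ᵐ x ∂(volume : Measure (Fin d → ℝ)), bE x < ⊤ := by
    have hne : ∫⁻ x, bE x ^ p' ∂(volume : Measure (Fin d → ℝ)) ≠ ⊤ :=
      ne_top_of_le_ne_top (ENNReal.rpow_ne_top_of_nonneg hp'0.le ENNReal.ofReal_ne_top) hbound
    filter_upwards [ae_lt_top (ENNReal.continuous_rpow_const.measurable.comp hbEmeas) hne]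
      with x hx
    by_contra hc
    rw [not_lt, top_le_iff] at hc
    simp only [Function.comp_apply] at hx
    rw [hc, ENNReal.top_rpow_of_pos hp'0] at hx
    exact (lt_irrefl _ hx).elim
  have hbmem : MemLp b (ENNReal.ofReal p') volume := by
    refine ⟨(hbEmeas.ennreal_toReal).aestronglyMeasurable, ?_⟩
    rw [eLpNorm_eq_lintegral_rpow_enorm_toReal hq'0 ENNReal.ofReal_ne_top, htR']
    refine ENNReal.rpow_lt_top_of_nonneg (by positivity) ?_
    refine ne_top_of_le_ne_top (ENNReal.rpow_ne_top_of_nonneg hp'0.le ENNReal.ofReal_ne_top)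
      (le_trans (lintegral_mono fun x => ?_) hbound)
    refine ENNReal.rpow_le_rpow ?_ hp'0.le
    rw [← ofReal_norm, Real.norm_of_nonneg (hb0 x)]
    exact ENNReal.ofReal_toReal_le
  have h_le_b : ∀ n, ∀ᵐ x ∂(volume : Measure (Fin d → ℝ)), h n x ≤ b x := by
    intro n
    filter_upwards [hbE_fin] with x hx
    have h1 : ENNReal.ofReal (h n x) ≤ bE x :=
      le_trans (ENNReal.ofReal_le_ofReal (h_le_MN n n le_rfl x))
        (le_iSup (fun N => ENNReal.ofReal (MN N x)) n)
    calc h n x = (ENNReal.ofReal (h n x)).toReal := (ENNReal.toReal_ofReal (hh0 n x)).symm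
      _ ≤ b x := ENNReal.toReal_mono hx.ne h1
  have hdom : ∀ n, ∀ᵐ x ∂(volume : Measure (Fin d → ℝ)),
      ‖(T (v n) : (Fin d → ℝ) → ℂ) x‖ ≤ b x * ‖v n‖ := by
    intro n
    by_cases hvn : v n = 0
    · have hT0 : T (v n) = 0 := by rw [hvn, map_zero]
      have hz : (T (v n) : (Fin d → ℝ) → ℂ) =ᵐ[volume] 0 := by
        rw [hT0]; exact Lp.coeFn_zero ℂ _ _
      filter_upwards [hz] with x hx
      rw [hx]
      simpa using mul_nonneg (hb0 x) (norm_nonneg (v n))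
    · filter_upwards [hgeq n, h_le_b n] with x h1 h2
      rw [h1]
      have hgv : ‖g n x‖ = h n x * ‖v n‖ := by
        show ‖g n x‖ = ‖g n x‖ / ‖v n‖ * ‖v n‖
        exact (div_mul_cancel₀ _ (norm_ne_zero_iff.mpr hvn)).symm
      rw [hgv]
      exact mul_le_mul_of_nonneg_right h2 (norm_nonneg _)
  refine ⟨b, hb0, hbmem, ?_⟩
  intro ψ
  have happ : ∀ k : ℕ, ∃ n, ‖v n - ψ‖ < 1 / (k + 1) := by
    intro k
    have hk : (0:ℝ) < 1 / (k + 1) := by positivity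
    obtain ⟨n, hn⟩ := Metric.denseRange_iff.mp hv ψ (1 / (k + 1)) hk
    exact ⟨n, by rwa [← dist_eq_norm, dist_comm]⟩
  choose w hw using happ
  have hvw : Filter.Tendsto (fun k : ℕ => ‖v (w k) - ψ‖) Filter.atTop (nhds 0) :=
    squeeze_zero (fun k => norm_nonneg _) (fun k => (hw k).le)
      tendsto_one_div_add_atTop_nhds_zero_nat
  have hvwt : Filter.Tendsto (fun k => v (w k)) Filter.atTop (nhds ψ) :=
    tendsto_iff_norm_sub_tendsto_zero.mpr hvw
  have hnorm : Filter.Tendsto (fun k => ‖v (w k)‖) Filter.atTop (nhds ‖ψ‖) := hvwt.norm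
  have hTlim : Filter.Tendsto (fun k => eLpNorm
      ((T (v (w k)) : (Fin d → ℝ) → ℂ) - (T ψ : (Fin d → ℝ) → ℂ)) (ENNReal.ofReal p') volume)
      Filter.atTop (nhds 0) := by
    have heq : ∀ k, eLpNorm ((T (v (w k)) : (Fin d → ℝ) → ℂ) - (T ψ : (Fin d → ℝ) → ℂ))
        (ENNReal.ofReal p') volume = ENNReal.ofReal ‖T (v (w k)) - T ψ‖ := by
      intro k
      rw [← eLpNorm_congr_ae (Lp.coeFn_sub (T (v (w k))) (T ψ)), Lp.norm_def,
        ENNReal.ofReal_toReal (Lp.eLpNorm_ne_top _)]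
    simp_rw [heq]
    rw [← ENNReal.ofReal_zero]
    apply ENNReal.tendsto_ofReal
    have hble : ∀ k, ‖T (v (w k)) - T ψ‖ ≤ ‖T‖ * ‖v (w k) - ψ‖ := fun k => by
      rw [← map_sub]; exact T.le_opNorm _
    exact squeeze_zero (fun k => norm_nonneg _) hble (by simpa using hvw.const_mul ‖T‖)
  have hTIM := tendstoInMeasure_of_tendsto_eLpNorm hq'0
    (fun k => Lp.aestronglyMeasurable _) (Lp.aestronglyMeasurable _) hTlim
  obtain ⟨ns, hns_mono, hns_ae⟩ := hTIM.exists_seq_tendsto_ae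
  have hnorms : Filter.Tendsto (fun i => ‖v (w (ns i))‖) Filter.atTop (nhds ‖ψ‖) :=
    hnorm.comp hns_mono.tendsto_atTop
  have hall : ∀ᵐ x ∂(volume : Measure (Fin d → ℝ)), ∀ i : ℕ,
      ‖(T (v (w (ns i))) : (Fin d → ℝ) → ℂ) x‖ ≤ b x * ‖v (w (ns i))‖ :=
    ae_all_iff.mpr fun i => hdom (w (ns i))
  filter_upwards [hall, hns_ae] with x hx1 hx2
  have h1 : Filter.Tendsto (fun i => ‖(T (v (w (ns i))) : (Fin d → ℝ) → ℂ) x‖)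
      Filter.atTop (nhds ‖(T ψ : (Fin d → ℝ) → ℂ) x‖) :=
    (continuous_norm.continuousAt.tendsto).comp hx2
  have h2 : Filter.Tendsto (fun i => b x * ‖v (w (ns i))‖) Filter.atTop (nhds (b x * ‖ψ‖)) :=
    hnorms.const_mul (b x)
  exact le_of_tendsto_of_tendsto' h1 h2 hx1
end

section
/- Let η be a Borel probability measure on ℝ and let g : ℝ → ℝ be a continuous nondecreasing function. Assume that the functions λ ↦ λ, λ ↦ g(λ) and λ ↦ λ·g(λ) are all η-integrable, and set u = ∫_ℝ λ dη(λ) and w = ∫_ℝ g(λ) dη(λ). If ∫_ℝ λ·g(λ) dη(λ) = u·w, then ∫_ℝ (λ − u)(g(λ) − g(u)) dη(λ) = 0, the equality g(λ) = g(u) holds for η-almost every λ, and consequently w = g(u). -/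
open MeasureTheory

/-- The Young-measure identification step: if `η` is a probability measure on `ℝ` with
barycenter `u`, `g` is continuous and nondecreasing, and `∫ λ g(λ) dη = u·w` where
`w = ∫ g dη`, then `∫ (λ − u)(g(λ) − g(u)) dη = 0`, `g(λ) = g(u)` for `η`-a.e. `λ`,
and `w = g(u)`. -/
theorem young_measure_identification
    (η : Measure ℝ) [IsProbabilityMeasure η]
    (g : ℝ → ℝ) (hg_cont : Continuous g) (hg_mono : Monotone g)
    (h_int_id : Integrable (fun lam : ℝ => lam) η)
    (h_int_g : Integrable g η)
    (h_int_mul : Integrable (fun lam : ℝ => lam * g lam) η)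
    (u w : ℝ)
    (hu : u = ∫ lam : ℝ, lam ∂η)
    (hw : w = ∫ lam : ℝ, g lam ∂η)
    (h_moment : ∫ lam : ℝ, lam * g lam ∂η = u * w) :
    (∫ lam : ℝ, (lam - u) * (g lam - g u) ∂η = 0) ∧
    (∀ᵐ lam ∂η, g lam = g u) ∧
    w = g u := by
  have hint : Integrable (fun lam : ℝ => (lam - u) * (g lam - g u)) η := by
    have : (fun lam : ℝ => (lam - u) * (g lam - g u)) =
        fun lam => lam * g lam - lam * g u - (u * g lam - u * g u) := by
      funext lam; ring
    rw [this]
    exact ((h_int_mul.sub (h_int_id.mul_const _)).sub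
      ((h_int_g.const_mul u).sub (integrable_const _)))
  have hI : ∫ lam : ℝ, (lam - u) * (g lam - g u) ∂η = 0 := by
    have expand : (fun lam : ℝ => (lam - u) * (g lam - g u)) =
        fun lam => lam * g lam - lam * g u - (u * g lam - u * g u) := by
      funext lam; ring
    have i1 : Integrable (fun lam : ℝ => lam * g lam - lam * g u) η :=
      h_int_mul.sub (h_int_id.mul_const _)
    have i2 : Integrable (fun lam : ℝ => u * g lam - u * g u) η :=
      (h_int_g.const_mul u).sub (integrable_const _)
    have i3 : Integrable (fun lam : ℝ => lam * g u) η := h_int_id.mul_const _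
    have i4 : Integrable (fun lam : ℝ => u * g lam) η := h_int_g.const_mul u
    rw [expand, integral_sub i1 i2, integral_sub h_int_mul i3,
      integral_sub i4 (integrable_const _),
      integral_mul_const, integral_const_mul, integral_const]
    simp only [measure_univ, ENNReal.toReal_one, one_smul, probReal_univ]
    rw [h_moment, ← hu, ← hw]
    ring
  have hnn : 0 ≤ᵐ[η] fun lam : ℝ => (lam - u) * (g lam - g u) := by
    filter_upwards with lam
    simp only [Pi.zero_apply]
    rcases le_total u lam with h | h
    · exact mul_nonneg (by linarith) (by linarith [hg_mono h])
    · nlinarith [hg_mono h]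
  have hae : (fun lam : ℝ => (lam - u) * (g lam - g u)) =ᵐ[η] 0 :=
    (integral_eq_zero_iff_of_nonneg_ae hnn hint).mp hI
  have hge : ∀ᵐ lam ∂η, g lam = g u := by
    filter_upwards [hae] with lam h
    simp only [Pi.zero_apply] at h
    rcases mul_eq_zero.mp h with h' | h'
    · have : lam = u := by linarith
      rw [this]
    · linarith
  refine ⟨hI, hge, ?_⟩
  rw [hw, integral_congr_ae hge, integral_const]
  simp
end
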